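/- Let R be a commutative ring, n ≥ 1, Λ = M_{n×n}(R), and M a finitely presented Λ-module. For any homomorphism R → S of commutative rings, identifying S ⊗_R Λ with M_{n×n}(S), one has Fit_{M_{n×n}(S)}(S ⊗_R M) = S · Fit_Λ(M), i.e. the Fitting ideal of the base-changed module equals the extension of the ideal Fit_Λ(M) along R → S. -/

import Mathlib

open Matrix

section FitDefs

variable (R : Type*) [CommRing R]

/-- The ideal of all maximal minors of a rectangular matrix (this is the zero
ideal when there are fewer rows than columns). -/
noncomputable def minorsIdeal {a b : ℕ} (H : Matrix (Fin a) (Fin b) R) : Ideal R :=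
  Ideal.span {x : R | ∃ f : Fin b → Fin a, x = ((H.submatrix f id).det)}

/-- `(H, π)` is a finite presentation `R^a --H--> R^b --π->> M` of the `R`-module `M`,
where `H` acts by right multiplication on row vectors. -/
def IsPresentation {a b : ℕ} (H : Matrix (Fin a) (Fin b) R) (M : Type*)
    [AddCommGroup M] [Module R M] (π : (Fin b → R) →ₗ[R] M) : Prop :=
  Function.Surjective π ∧ LinearMap.ker π = LinearMap.range H.vecMulLinear

/-- The (zeroth) Fitting ideal of an `R`-module, defined as the supremum over all
finite presentations of the ideal of maximal minors; for a finitely presented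
module this agrees with the classical Fitting ideal computed from any single
presentation, since the latter is independent of the chosen presentation. -/
noncomputable def fitIdeal (M : Type*) [AddCommGroup M] [Module R M] : Ideal R :=
  ⨆ (a : ℕ) (b : ℕ) (H : Matrix (Fin a) (Fin b) R) (π : (Fin b → R) →ₗ[R] M)
    (_ : IsPresentation R H M π), minorsIdeal R H

end FitDefs

section MatrixModule

variable (n : ℕ) (R : Type*) [CommRing R] (M : Type*) [AddCommGroup M]
  [Module (Matrix (Fin n) (Fin n) R) M] [Module R M]
  [IsScalarTower R (Matrix (Fin n) (Fin n) R) M]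

/-- Left multiplication by the matrix unit `e_{ii}` as an `R`-linear endomorphism
of a module over the matrix ring. -/
noncomputable def eMul (i : Fin n) : M →ₗ[R] M where
  toFun x := Matrix.single i i (1 : R) • x
  map_add' x y := smul_add _ x y
  map_smul' r x := (smul_comm r (Matrix.single i i (1 : R)) x).symm

/-- The `R`-submodule `e_{ii}M` of a module `M` over the matrix ring. -/
noncomputable def eComponent (i : Fin n) : Submodule R M :=
  LinearMap.range (eMul n R M i)

end MatrixModule

section FittingAux

set_option linter.unusedSectionVars false

variable {R : Type*} [CommRing R]

/-- Auxiliary: the ideal generated by determinants of square matrices all of whose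
rows lie in a given submodule of the free module. -/
noncomputable def dIdeal (ι : Type*) [Fintype ι] [DecidableEq ι] (N : Submodule R (ι → R)) :
    Ideal R :=
  Ideal.span {x : R | ∃ B : Matrix ι ι R, (∀ i, B i ∈ N) ∧ x = B.det}

lemma det_mem_dIdeal {ι : Type*} [Fintype ι] [DecidableEq ι] {N : Submodule R (ι → R)}
    {B : Matrix ι ι R} (hB : ∀ i, B i ∈ N) : B.det ∈ dIdeal ι N :=
  Ideal.subset_span ⟨B, hB, rfl⟩

lemma dIdeal_span (ι : Type*) [Fintype ι] [DecidableEq ι] (A : Set (ι → R)) :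
    dIdeal ι (Submodule.span R A) =
      Ideal.span {x : R | ∃ B : Matrix ι ι R, (∀ i, B i ∈ A) ∧ x = B.det} := by
  apply le_antisymm
  · rw [dIdeal, Ideal.span_le]
    rintro x ⟨B, hB, rfl⟩
    set I := Ideal.span {x : R | ∃ B : Matrix ι ι R, (∀ i, B i ∈ A) ∧ x = B.det} with hI
    have key : ∀ (s : Finset ι) (B : Matrix ι ι R), (∀ i, B i ∈ Submodule.span R A) →
        (∀ i ∉ s, B i ∈ A) → B.det ∈ I := by
      intro s
      induction s using Finset.induction_on with
      | empty => intro B _ h; exact Ideal.subset_span ⟨B, fun i => h i (by simp), rfl⟩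
      | @insert j s hj ih =>
        intro B hspan hout
        have := Submodule.span_induction
          (p := fun r _ => (B.updateRow j r).det ∈ I)
          (fun r hr _ => by
            apply ih
            · intro i
              by_cases h : i = j
              · subst h; rw [Matrix.updateRow_self]; exact Submodule.subset_span hr
              · rw [Matrix.updateRow_ne h]; exact hspan i
            · intro i hi
              by_cases h : i = j
              · subst h; rw [Matrix.updateRow_self]; exact hr
              · rw [Matrix.updateRow_ne h]; exact hout i (by simp [h, hi]))
          (by show (B.updateRow j 0).det ∈ I
              rw [Matrix.det_eq_zero_of_row_eq_zero j
                (fun k => by rw [Matrix.updateRow_self]; rfl)]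
              exact I.zero_mem)
          (fun x y hx hy px py => by
            show (B.updateRow j (x + y)).det ∈ I
            rw [Matrix.det_updateRow_add]; exact I.add_mem px py)
          (fun a x hx px => by
            show (B.updateRow j (a • x)).det ∈ I
            rw [Matrix.det_updateRow_smul]; exact I.smul_mem a px)
          (hspan j)
        simpa [Matrix.updateRow_eq_self] using this
    exact key Finset.univ B hB (fun i hi => absurd (Finset.mem_univ i) hi)
  · rw [Ideal.span_le]
    rintro x ⟨B, hB, rfl⟩
    exact det_mem_dIdeal (fun i => Submodule.subset_span (hB i))

lemma minorsIdeal_eq_dIdeal {a b : ℕ} (H : Matrix (Fin a) (Fin b) R) :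
    minorsIdeal R H = dIdeal (Fin b) (LinearMap.range H.vecMulLinear) := by
  rw [range_vecMulLinear, dIdeal_span, minorsIdeal]
  congr 1
  ext x
  constructor
  · rintro ⟨f, rfl⟩
    exact ⟨H.submatrix f id, fun i => ⟨f i, rfl⟩, rfl⟩
  · rintro ⟨B, hB, rfl⟩
    choose f hf using hB
    refine ⟨f, ?_⟩
    congr 1
    ext i j
    exact (congrFun (hf i) j).symm

lemma dIdeal_le_reindex {ι ι' : Type*} [Fintype ι] [DecidableEq ι] [Fintype ι'] [DecidableEq ι']
    (e : ι ≃ ι') {N : Submodule R (ι → R)} {N' : Submodule R (ι' → R)}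
    (h : ∀ x ∈ N', (fun i => x (e i)) ∈ N) : dIdeal ι' N' ≤ dIdeal ι N := by
  rw [dIdeal, Ideal.span_le]
  rintro x ⟨B, hB, rfl⟩
  rw [← Matrix.det_submatrix_equiv_self e B]
  exact det_mem_dIdeal (fun i => h _ (hB (e i)))

lemma minorsIdeal_map {S : Type*} [CommRing S] (φ : R →+* S) {a b : ℕ}
    (H : Matrix (Fin a) (Fin b) R) :
    minorsIdeal S (H.map φ) = Ideal.map φ (minorsIdeal R H) := by
  rw [minorsIdeal, minorsIdeal, Ideal.map_span]
  congr 1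
  ext x
  constructor
  · rintro ⟨f, rfl⟩
    exact ⟨(H.submatrix f id).det, ⟨f, rfl⟩, by rw [RingHom.map_det, Matrix.submatrix_map]; rfl⟩
  · rintro ⟨y, ⟨f, rfl⟩, rfl⟩
    exact ⟨f, by rw [RingHom.map_det, Matrix.submatrix_map]; rfl⟩

variable {ι κ : Type*} [Fintype ι] [Fintype κ] [DecidableEq ι] [DecidableEq κ]
variable {M : Type*} [AddCommGroup M] [Module R M]

/-- The key determinant lemma: a square matrix over `ι ⊕ κ` whose rows are each either
supported on the `inl` part (with the `inl`-part in `N`) or supported on the `inr` part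
has determinant in `dIdeal ι N`. -/
lemma det_piecewise_mem (N : Submodule R (ι → R)) (s : Finset (ι ⊕ κ))
    (z : ι ⊕ κ → ι → R) (hz : ∀ p, z p ∈ N) (y : ι ⊕ κ → κ → R) :
    (Matrix.of (s.piecewise (fun p => Sum.elim (z p) 0) (fun p => Sum.elim 0 (y p)))).det
      ∈ dIdeal ι N := by
  classical
  set D : Matrix (ι ⊕ κ) (ι ⊕ κ) R :=
    Matrix.of (s.piecewise (fun p => Sum.elim (z p) 0) (fun p => Sum.elim 0 (y p))) with hD
  by_cases hs : s.card = Fintype.card ι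
  · -- rearrange into block form
    have hcι : Fintype.card ι = Fintype.card {x : ι ⊕ κ // x ∈ s} := by
      rw [Fintype.card_coe, hs]
    have hcκ : Fintype.card κ = Fintype.card {x : ι ⊕ κ // x ∉ s} := by
      have h1 : Fintype.card {x : ι ⊕ κ // x ∉ s} = Fintype.card (ι ⊕ κ) - s.card := by
        rw [Fintype.card_subtype_compl]
        congr 1
        exact Fintype.card_coe s
      have h2 : s.card ≤ Fintype.card (ι ⊕ κ) := by
        simpa using Finset.card_le_card (Finset.subset_univ s)
      rw [h1, Fintype.card_sum] at *
      omega
    let e₁ : ι ≃ {x : ι ⊕ κ // x ∈ s} := Fintype.equivOfCardEq hcι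
    let e₂ : κ ≃ {x : ι ⊕ κ // x ∉ s} := Fintype.equivOfCardEq hcκ
    let σ : ι ⊕ κ ≃ ι ⊕ κ := (Equiv.sumCongr e₁ e₂).trans (Equiv.sumCompl (· ∈ s))
    have hσl : ∀ i : ι, (σ (Sum.inl i) : ι ⊕ κ) ∈ s := fun i => (e₁ i).2
    have hσr : ∀ j : κ, (σ (Sum.inr j) : ι ⊕ κ) ∉ s := fun j => (e₂ j).2
    have hblock : D.submatrix σ id =
        Matrix.fromBlocks (Matrix.of fun i i' => z (σ (Sum.inl i)) i') 0 0
          (Matrix.of fun j j' => y (σ (Sum.inr j)) j') := by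
      ext p q
      cases p with
      | inl i =>
        cases q with
        | inl i' => simp [D, Matrix.submatrix_apply, Finset.piecewise_eq_of_mem _ _ _ (hσl i)]
        | inr j' => simp [D, Matrix.submatrix_apply, Finset.piecewise_eq_of_mem _ _ _ (hσl i)]
      | inr j =>
        cases q with
        | inl i' => simp [D, Matrix.submatrix_apply, Finset.piecewise_eq_of_notMem _ _ _ (hσr j)]
        | inr j' => simp [D, Matrix.submatrix_apply, Finset.piecewise_eq_of_notMem _ _ _ (hσr j)]
    have hperm : (D.submatrix ⇑σ id).det = ((Equiv.Perm.sign σ : ℤ) : R) * D.det :=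
      Matrix.det_permute σ D
    have hdet2 : (D.submatrix ⇑σ id).det ∈ dIdeal ι N := by
      rw [hblock, Matrix.det_fromBlocks_zero₁₂]
      exact Ideal.mul_mem_right _ _ (det_mem_dIdeal (fun i => hz _))
    rcases Int.units_eq_one_or (Equiv.Perm.sign σ) with h | h <;> rw [h] at hperm
    · have hd : D.det = (D.submatrix ⇑σ id).det := by rw [hperm]; push_cast; ring
      rw [hd]; exact hdet2
    · have hd : D.det = -(D.submatrix ⇑σ id).det := by rw [hperm]; push_cast; ring
      rw [hd]; exact neg_mem hdet2
  · -- determinant is zero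
    have : D.det = 0 := by
      rw [Matrix.det_apply]
      apply Finset.sum_eq_zero
      intro σ _
      have : ∃ p, D (σ p) p = 0 := by
        by_contra hcon
        push_neg at hcon
        have h1 : ∀ i : ι, σ (Sum.inl i) ∈ s := by
          intro i
          by_contra h
          exact hcon (Sum.inl i) (by simp [D, Finset.piecewise_eq_of_notMem _ _ _ h])
        have h2 : ∀ j : κ, σ (Sum.inr j) ∉ s := by
          intro j h
          exact hcon (Sum.inr j) (by simp [D, Finset.piecewise_eq_of_mem _ _ _ h])
        have hι : Fintype.card ι ≤ s.card := by
          rw [← Fintype.card_coe]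
          exact Fintype.card_le_of_injective (fun i => ⟨σ (Sum.inl i), h1 i⟩)
            (fun a b hab => Sum.inl_injective (σ.injective (Subtype.ext_iff.mp hab)))
        have hκ : Fintype.card κ ≤ Fintype.card {x : ι ⊕ κ // x ∉ s} :=
          Fintype.card_le_of_injective (fun j => ⟨σ (Sum.inr j), h2 j⟩)
            (fun a b hab => Sum.inr_injective (σ.injective (Subtype.ext_iff.mp hab)))
        have h3 : Fintype.card {x : ι ⊕ κ // x ∉ s} = Fintype.card (ι ⊕ κ) - s.card := by
          rw [Fintype.card_subtype_compl]
          congr 1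
          exact Fintype.card_coe s
        have h4 : s.card ≤ Fintype.card (ι ⊕ κ) := by
          simpa using Finset.card_le_card (Finset.subset_univ s)
        rw [h3, Fintype.card_sum] at hκ
        rw [Fintype.card_sum] at h4
        omega
      obtain ⟨p, hp⟩ := this
      have : ∏ i, D (σ i) i = 0 := Finset.prod_eq_zero (Finset.mem_univ p) hp
      rw [this]
      simp
    rw [this]
    exact Ideal.zero_mem _
/-- adjoining generators to a presentation -/
noncomputable def addGen (π : (ι → R) →ₗ[R] M) (τ : (κ → R) →ₗ[R] M) :
    ((ι ⊕ κ) → R) →ₗ[R] M :=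
  π ∘ₗ LinearMap.funLeft R R Sum.inl + τ ∘ₗ LinearMap.funLeft R R Sum.inr

lemma addGen_apply (π : (ι → R) →ₗ[R] M) (τ : (κ → R) →ₗ[R] M) (g : (ι ⊕ κ) → R) :
    addGen π τ g = π (g ∘ Sum.inl) + τ (g ∘ Sum.inr) := rfl

lemma dIdeal_ker_addGen (π : (ι → R) →ₗ[R] M) (τ : (κ → R) →ₗ[R] M)
    (v : κ → ι → R) (hv : ∀ j, π (v j) = τ (Pi.single j 1)) :
    dIdeal (ι ⊕ κ) (LinearMap.ker (addGen π τ)) = dIdeal ι (LinearMap.ker π) := by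
  classical
  have hτ : ∀ c : κ → R, τ c = ∑ j, c j • τ (Pi.single j 1) := by
    intro c
    conv_lhs => rw [← Finset.univ_sum_single c]
    rw [map_sum]
    refine Finset.sum_congr rfl fun j _ => ?_
    rw [← _root_.map_smul]
    congr 1
    rw [← Pi.single_smul, smul_eq_mul, mul_one]
  apply le_antisymm
  · rw [dIdeal, Ideal.span_le]
    rintro x ⟨B, hB, rfl⟩
    -- column operations
    set V : Matrix κ ι R := Matrix.of v with hV
    set E : Matrix (ι ⊕ κ) (ι ⊕ κ) R := Matrix.fromBlocks 1 0 V 1 with hE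
    have hdetE : E.det = 1 := by rw [hE, Matrix.det_fromBlocks_zero₁₂]; simp
    set C : Matrix (ι ⊕ κ) (ι ⊕ κ) R := B * E with hC
    have hdetC : C.det = B.det := by rw [hC, Matrix.det_mul, hdetE, mul_one]
    have hzmem : ∀ p, (fun i => C p (Sum.inl i)) ∈ LinearMap.ker π := by
      intro p
      have hrow : (fun i => C p (Sum.inl i)) =
          (fun i => B p (Sum.inl i)) + ∑ j, B p (Sum.inr j) • v j := by
        funext i
        simp only [hC, hE, hV, Matrix.mul_apply, Fintype.sum_sum_type,
          Matrix.fromBlocks_apply₁₁, Matrix.fromBlocks_apply₂₁, Matrix.one_apply,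
          Matrix.of_apply, mul_ite, mul_one, mul_zero, Finset.sum_ite_eq',
          Finset.mem_univ, if_true, Pi.add_apply, Finset.sum_apply, Pi.smul_apply,
          smul_eq_mul]
      rw [LinearMap.mem_ker, hrow, map_add, map_sum]
      have : ∀ j, π (B p (Sum.inr j) • v j) = B p (Sum.inr j) • τ (Pi.single j 1) := by
        intro j; rw [_root_.map_smul, hv j]
      rw [Finset.sum_congr rfl (fun j _ => this j), ← hτ]
      have h0 := hB p
      rw [LinearMap.mem_ker, addGen_apply] at h0
      exact h0
    -- split rows
    have hsplit : C.det ∈ dIdeal ι (LinearMap.ker π) := by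
      let a : (ι ⊕ κ) → (ι ⊕ κ) → R := fun p => Sum.elim (fun i => C p (Sum.inl i)) 0
      let b : (ι ⊕ κ) → (ι ⊕ κ) → R := fun p => Sum.elim 0 (fun j => C p (Sum.inr j))
      have hCab : C = Matrix.of (a + b) := by
        ext p q
        cases q <;> simp [a, b]
      have hdet : C.det = Matrix.detRowAlternating.toMultilinearMap (a + b) := by
        rw [hCab]; rfl
      rw [hdet, MultilinearMap.map_add_univ]
      apply Ideal.sum_mem
      intro s _
      exact det_piecewise_mem (LinearMap.ker π) s _ hzmem _
    rw [← hdetC]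
    exact hsplit
  · rw [dIdeal, Ideal.span_le]
    rintro x ⟨Z, hZ, rfl⟩
    have : Z.det = (Matrix.fromBlocks Z (0 : Matrix ι κ R) (Matrix.of fun j i => -(v j i)) (1 : Matrix κ κ R)).det := by
      rw [Matrix.det_fromBlocks_zero₁₂]; simp
    rw [this]
    apply det_mem_dIdeal
    intro p
    cases p with
    | inl i =>
      rw [LinearMap.mem_ker, addGen_apply]
      have h1 : (Matrix.fromBlocks Z (0 : Matrix ι κ R) (Matrix.of fun j i => -(v j i)) (1 : Matrix κ κ R) (Sum.inl i))
          ∘ Sum.inl = Z i := by funext i'; simp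
      have h2 : (Matrix.fromBlocks Z (0 : Matrix ι κ R) (Matrix.of fun j i => -(v j i)) (1 : Matrix κ κ R) (Sum.inl i))
          ∘ Sum.inr = 0 := by funext j'; simp
      rw [h1, h2, map_zero, hZ i, add_zero]
    | inr j =>
      rw [LinearMap.mem_ker, addGen_apply]
      have h1 : (Matrix.fromBlocks Z (0 : Matrix ι κ R) (Matrix.of fun j i => -(v j i)) (1 : Matrix κ κ R) (Sum.inr j))
          ∘ Sum.inl = -(v j) := by funext i'; simp
      have h2 : (Matrix.fromBlocks Z (0 : Matrix ι κ R) (Matrix.of fun j i => -(v j i)) (1 : Matrix κ κ R) (Sum.inr j))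
          ∘ Sum.inr = Pi.single j 1 := by
        funext j'
        simp [Matrix.one_apply, Pi.single_apply, eq_comm]
      rw [h1, h2, map_neg, hv j]
      simp

lemma dIdeal_ker_eq {ι κ : Type*} [Fintype ι] [Fintype κ] [DecidableEq ι] [DecidableEq κ]
    {M : Type*} [AddCommGroup M] [Module R M]
    (π₁ : (ι → R) →ₗ[R] M) (π₂ : (κ → R) →ₗ[R] M)
    (h₁ : Function.Surjective π₁) (h₂ : Function.Surjective π₂) :
    dIdeal ι (LinearMap.ker π₁) = dIdeal κ (LinearMap.ker π₂) := by
  choose v hv using fun j => h₁ (π₂ (Pi.single j 1))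
  choose w hw using fun i => h₂ (π₁ (Pi.single i 1))
  rw [← dIdeal_ker_addGen π₁ π₂ v hv, ← dIdeal_ker_addGen π₂ π₁ w hw]
  apply le_antisymm
  · apply dIdeal_le_reindex (Equiv.sumComm κ ι)
    intro x hx
    rw [LinearMap.mem_ker] at hx ⊢
    rw [addGen_apply] at hx ⊢
    rw [show ((fun p => x ((Equiv.sumComm κ ι) p)) ∘ Sum.inl) = x ∘ Sum.inr from rfl,
      show ((fun p => x ((Equiv.sumComm κ ι) p)) ∘ Sum.inr) = x ∘ Sum.inl from rfl,
      add_comm]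
    exact hx
  · apply dIdeal_le_reindex (Equiv.sumComm ι κ)
    intro x hx
    rw [LinearMap.mem_ker] at hx ⊢
    rw [addGen_apply] at hx ⊢
    rw [show ((fun p => x ((Equiv.sumComm ι κ) p)) ∘ Sum.inl) = x ∘ Sum.inr from rfl,
      show ((fun p => x ((Equiv.sumComm ι κ) p)) ∘ Sum.inr) = x ∘ Sum.inl from rfl,
      add_comm]
    exact hx

/-- The Fitting ideal of a module with a presentation equals the minors ideal of
that presentation. -/
lemma fitIdeal_eq_of_isPresentation {M : Type*} [AddCommGroup M] [Module R M]
    {a b : ℕ} {H : Matrix (Fin a) (Fin b) R} {π : (Fin b → R) →ₗ[R] M}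
    (h : IsPresentation R H M π) : fitIdeal R M = minorsIdeal R H := by
  apply le_antisymm
  · rw [fitIdeal]
    refine iSup_le fun a' => iSup_le fun b' => iSup_le fun H' => iSup_le fun π' =>
      iSup_le fun h' => ?_
    rw [minorsIdeal_eq_dIdeal, minorsIdeal_eq_dIdeal, ← h.2, ← h'.2]
    exact le_of_eq (dIdeal_ker_eq π' π h'.1 h.1)
  · rw [fitIdeal]
    exact le_iSup_of_le a (le_iSup_of_le b (le_iSup_of_le H (le_iSup_of_le π
      (le_iSup_of_le h le_rfl))))

/-- Any finitely presented module admits a matrix presentation. -/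
lemma exists_isPresentation (M : Type*) [AddCommGroup M] [Module R M]
    [Module.FinitePresentation R M] :
    ∃ (a b : ℕ) (H : Matrix (Fin a) (Fin b) R) (π : (Fin b → R) →ₗ[R] M),
      IsPresentation R H M π := by
  obtain ⟨b, π, hπ⟩ := Module.Finite.exists_fin' R M
  have hker : (LinearMap.ker π).FG := Module.FinitePresentation.fg_ker π hπ
  obtain ⟨a, v, hv⟩ := Submodule.fg_iff_exists_fin_generating_family.mp hker
  refine ⟨a, b, Matrix.of v, π, hπ, ?_⟩
  rw [range_vecMulLinear, ← hv]
  rfl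

end FittingAux

section FP
variable (n : ℕ) (R : Type*) [CommRing R] (M : Type*) [AddCommGroup M]
  [Module (Matrix (Fin n) (Fin n) R) M] [Module R M]
  [IsScalarTower R (Matrix (Fin n) (Fin n) R) M]

lemma fp_restrict [h : Module.FinitePresentation (Matrix (Fin n) (Fin n) R) M] :
    Module.FinitePresentation R M := by
  classical
  obtain ⟨s, hs, hk⟩ := h
  set Λ := Matrix (Fin n) (Fin n) R
  set p : (s →₀ Λ) →ₗ[Λ] M := Finsupp.linearCombination Λ ((↑) : s → M) with hp
  have hsurj : Function.Surjective p := by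
    apply LinearMap.range_eq_top.mp
    rw [hp, Finsupp.range_linearCombination, Subtype.range_val]
    rw [← hs]
  haveI : Module.Finite Λ ↥(LinearMap.ker p) := Module.Finite.iff_fg.mpr hk
  haveI : Module.Finite R Λ := inferInstance
  haveI : Module.Finite R ↥(LinearMap.ker p) := Module.Finite.trans Λ _
  haveI : Module.Free R Λ := inferInstance
  haveI : Module.Free R (s →₀ Λ) := inferInstance
  haveI : Module.Finite R (s →₀ Λ) := inferInstance
  haveI : Module.FinitePresentation R (s →₀ Λ) :=
    Module.finitePresentation_of_projective R _
  apply Module.finitePresentation_of_surjective (p.restrictScalars R) hsurj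
  have : LinearMap.ker (p.restrictScalars R) = (LinearMap.ker p).restrictScalars R := rfl
  rw [this]
  exact Module.Finite.iff_fg.mp (by exact ‹Module.Finite R ↥(LinearMap.ker p)›)
end FP

section FP2
variable {n : ℕ} {R : Type*} [CommRing R] {M : Type*} [AddCommGroup M]
  [Module (Matrix (Fin n) (Fin n) R) M] [Module R M]
  [IsScalarTower R (Matrix (Fin n) (Fin n) R) M] (i : Fin n)

lemma eMul_apply (x : M) : eMul n R M i x = Matrix.single i i (1 : R) • x := rfl

lemma smul_e_smul_e (x : M) :
    Matrix.single i i (1 : R) • Matrix.single i i (1 : R) • x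
      = Matrix.single i i (1 : R) • x := by
  rw [smul_smul, Matrix.single_mul_single_same, one_mul]

lemma mem_eComponent_iff {x : M} :
    x ∈ eComponent n R M i ↔ Matrix.single i i (1 : R) • x = x := by
  constructor
  · rintro ⟨y, rfl⟩
    rw [eMul_apply, smul_e_smul_e]
  · intro h
    exact ⟨x, h⟩

/-- The projection of `M` onto `e_{ii}M`. -/
noncomputable def eProj : M →ₗ[R] ↥(eComponent n R M i) :=
  (eMul n R M i).codRestrict (eComponent n R M i) (fun x => ⟨x, rfl⟩)

lemma eProj_surjective : Function.Surjective (eProj (R := R) (M := M) i) := by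
  intro y
  refine ⟨(y : M), Subtype.ext ?_⟩
  have := (mem_eComponent_iff i).mp y.2
  exact this

lemma eProj_coe (x : M) : (eProj (R := R) (M := M) i x : M) = Matrix.single i i (1 : R) • x := rfl

lemma fp_eComponent [Module.FinitePresentation R M] :
    Module.FinitePresentation R ↥(eComponent n R M i) := by
  apply Module.finitePresentation_of_surjective (eProj i) (eProj_surjective i)
  have hker : LinearMap.ker (eProj (R := R) (M := M) i) =
      LinearMap.range (LinearMap.id (R := R) (M := M) - eMul n R M i) := by
    ext x
    simp only [eProj, LinearMap.ker_codRestrict, LinearMap.mem_ker,  LinearMap.mem_range,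
      LinearMap.sub_apply, LinearMap.id_apply]
    constructor
    · intro h
      exact ⟨x, by rw [show eMul n R M i x = 0 from congrArg Subtype.val h, sub_zero]⟩
    · rintro ⟨y, rfl⟩
      apply Subtype.ext
      show eMul n R M i _ = 0
      simp only [eMul_apply, smul_sub, smul_e_smul_e, sub_self]
  rw [hker, LinearMap.range_eq_map]
  exact Submodule.FG.map _ (Module.finite_def.mp inferInstance)
end FP2

/-- Base change: let `M` be a finitely presented module over `Λ = M_{n×n}(R)`,
let `R → S` be a homomorphism of commutative rings, and let `M'` (a module over
`M_{n×n}(S)`) be the base change `S ⊗_R M`, realised by an `R`-linear map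
`f : M → M'` which is a base change along `R → S` and is compatible with the
identification `S ⊗_R M_{n×n}(R) = M_{n×n}(S)` (entrywise extension of scalars).
Then `Fit_{M_{n×n}(S)}(S ⊗_R M) = S · Fit_Λ(M)`, the extension of the ideal
`Fit_Λ(M)` along `R → S`. -/
theorem fitIdeal_baseChange (n : ℕ) (hn : 0 < n) (R S : Type*) [CommRing R] [CommRing S]
    [Algebra R S] (M : Type*) [AddCommGroup M] [Module (Matrix (Fin n) (Fin n) R) M]
    [Module R M] [IsScalarTower R (Matrix (Fin n) (Fin n) R) M]
    [Module.FinitePresentation (Matrix (Fin n) (Fin n) R) M]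
    (M' : Type*) [AddCommGroup M'] [Module (Matrix (Fin n) (Fin n) S) M']
    [Module S M'] [IsScalarTower S (Matrix (Fin n) (Fin n) S) M']
    [Module R M'] [IsScalarTower R S M']
    (f : M →ₗ[R] M') (hbc : IsBaseChange S f)
    (hcompat : ∀ (A : Matrix (Fin n) (Fin n) R) (m : M),
      f (A • m) = (A.map (algebraMap R S)) • f m) :
    fitIdeal S (eComponent n S M' ⟨0, hn⟩) =
      Ideal.map (algebraMap R S) (fitIdeal R (eComponent n R M ⟨0, hn⟩)) := by
  classical
  set i0 : Fin n := ⟨0, hn⟩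
  set φ : R →+* S := algebraMap R S with hφ
  -- a presentation of e₀₀M over R
  haveI : Module.FinitePresentation R M := fp_restrict n R M
  haveI : Module.FinitePresentation R ↥(eComponent n R M i0) := fp_eComponent i0
  obtain ⟨a, b, H, π, hp⟩ := exists_isPresentation (R := R) ↥(eComponent n R M i0)
  -- basic compatibilities
  have hmap : (Matrix.single i0 i0 (1 : R)).map φ
      = Matrix.single i0 i0 (1 : S) := by
    ext p q
    simp [Matrix.single, Matrix.map_apply, apply_ite φ]
  have hfe : ∀ m : M, f (Matrix.single i0 i0 (1 : R) • m)
      = Matrix.single i0 i0 (1 : S) • f m := by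
    intro m; rw [hcompat, hmap]
  have hcomm : ∀ (s : S) (A : Matrix (Fin n) (Fin n) S) (x : M'),
      A • (s • x) = s • (A • x) := by
    intro s A x
    have h1 : s • x = (s • (1 : Matrix (Fin n) (Fin n) S)) • x := by
      rw [smul_assoc, one_smul]
    rw [h1, ← mul_smul, mul_smul_comm, mul_one, smul_assoc]
  -- the images of the generators
  set w : Fin b → M := fun k => ((π (Pi.single k 1) : ↥(eComponent n R M i0)) : M) with hw
  have hwmem : ∀ k, Matrix.single i0 i0 (1 : R) • w k = w k := fun k =>
    (mem_eComponent_iff i0).mp (π (Pi.single k 1)).2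
  have hπsum : ∀ x : Fin b → R, π x = ∑ k, x k • π (Pi.single k 1) := by
    intro x
    conv_lhs => rw [← Finset.univ_sum_single x]
    rw [map_sum]
    refine Finset.sum_congr rfl fun k _ => ?_
    rw [← _root_.map_smul]
    congr 1
    rw [← Pi.single_smul, smul_eq_mul, mul_one]
  have hπR : ∀ x : Fin b → R, ((π x : ↥(eComponent n R M i0)) : M) = ∑ k, x k • w k := by
    intro x
    rw [hπsum x]
    simp [hw]
  -- the S-side presentation map
  set π'' : (Fin b → S) →ₗ[S] M' :=
    ∑ k, LinearMap.smulRight (LinearMap.proj k) (f (w k)) with hπ''def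
  have hπ''_apply : ∀ y : Fin b → S, π'' y = ∑ k, y k • f (w k) := by
    intro y
    rw [hπ''def]
    simp
  have hsumsingleS : ∀ y : Fin b → S, y = ∑ k, y k • (Pi.single k (1 : S) : Fin b → S) := by
    intro y
    conv_lhs => rw [← Finset.univ_sum_single y]
    refine Finset.sum_congr rfl fun k _ => ?_
    rw [← Pi.single_smul, smul_eq_mul, mul_one]
  have hπ''single : ∀ k, π'' (Pi.single k 1) = f (w k) := by
    intro k
    rw [hπ''_apply]
    rw [Finset.sum_eq_single k (fun j _ hj => by rw [Pi.single_eq_of_ne hj, zero_smul])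
      (by simp)]
    rw [Pi.single_eq_same, one_smul]
  have hfπ : ∀ x : Fin b → R, π'' (fun k => φ (x k)) = f ((π x : ↥(eComponent n R M i0)) : M) := by
    intro x
    rw [hπ''_apply, hπR, map_sum]
    refine Finset.sum_congr rfl fun k _ => ?_
    rw [_root_.map_smul, algebraMap_smul]
  have hπ''mem : ∀ y : Fin b → S, π'' y ∈ eComponent n S M' i0 := by
    intro y
    rw [mem_eComponent_iff, hπ''_apply, Finset.smul_sum]
    refine Finset.sum_congr rfl fun k _ => ?_
    rw [hcomm, ← hfe, hwmem]
  set π' : (Fin b → S) →ₗ[S] ↥(eComponent n S M' i0) :=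
    π''.codRestrict (eComponent n S M' i0) hπ''mem with hπ'def
  have hπ'coe : ∀ y, ((π' y : ↥(eComponent n S M' i0)) : M') = π'' y := fun y => rfl
  -- surjectivity
  have hsurjP : ∀ m' : M', ∃ x, π'' x = Matrix.single i0 i0 (1 : S) • m' := by
    intro m'
    refine hbc.inductionOn m' _ ⟨0, by simp⟩ (fun m => ?_) (fun s m' ⟨x, hx⟩ => ?_)
      (fun m₁ m₂ ⟨x₁, hx₁⟩ ⟨x₂, hx₂⟩ => ⟨x₁ + x₂, by rw [map_add, hx₁, hx₂, smul_add]⟩)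
    · obtain ⟨x₀, hx₀⟩ := hp.1 ⟨Matrix.single i0 i0 (1 : R) • m, ⟨m, rfl⟩⟩
      refine ⟨fun k => φ (x₀ k), ?_⟩
      rw [hfπ, hx₀]
      exact hfe m
    · exact ⟨s • x, by rw [_root_.map_smul, hx, hcomm]⟩
  have hsurj : Function.Surjective π' := by
    intro y
    obtain ⟨m', hm'⟩ := y.2
    obtain ⟨x, hx⟩ := hsurjP m'
    exact ⟨x, Subtype.ext (by rw [hπ'coe, hx]; exact hm')⟩
  -- kernel ⊇ rows
  have hker_ge : LinearMap.range (H.map φ).vecMulLinear ≤ LinearMap.ker π' := by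
    rw [range_vecMulLinear, Submodule.span_le]
    rintro _ ⟨j, rfl⟩
    have hHj : H j ∈ LinearMap.ker π := by
      rw [hp.2]
      exact ⟨Pi.single j 1, by rw [Matrix.vecMulLinear_apply, Matrix.single_one_vecMul]; rfl⟩
    have h0 : π (H j) = 0 := hHj
    have : (H.map φ).row j = fun k => φ (H j k) := rfl
    refine SetLike.mem_coe.mpr (LinearMap.mem_ker.mpr (Subtype.ext ?_))
    rw [hπ'coe, this, hfπ, h0]
    simp
  -- kernel ⊆ rows, via the universal property of base change
  have hker_le : LinearMap.ker π' ≤ LinearMap.range (H.map φ).vecMulLinear := by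
    set Q := (Fin b → S) ⧸ LinearMap.range (H.map φ).vecMulLinear with hQ
    set α : (Fin b → R) →ₗ[R] (Fin b → S) := (Algebra.linearMap R S).compLeft (Fin b) with hα
    have hα_apply : ∀ (x : Fin b → R) (k), α x k = φ (x k) := fun x k => rfl
    set θ : (Fin b → R) →ₗ[R] Q :=
      ((LinearMap.range (H.map φ).vecMulLinear).mkQ.restrictScalars R) ∘ₗ α with hθdef
    have hθ_apply : ∀ x : Fin b → R, θ x = Submodule.Quotient.mk (α x) := fun x => rfl
    have hθker : LinearMap.ker π ≤ LinearMap.ker θ := by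
      intro x hx
      rw [hp.2] at hx
      obtain ⟨c, rfl⟩ := hx
      have hvm : α (H.vecMulLinear c) = (H.map φ).vecMulLinear (fun i => φ (c i)) := by
        funext k
        rw [hα_apply]
        simp only [Matrix.vecMulLinear_apply, Matrix.vecMul, dotProduct,
          Matrix.map_apply, map_sum, _root_.map_mul]
      rw [LinearMap.mem_ker, hθ_apply, hvm]
      rw [Submodule.Quotient.mk_eq_zero]
      exact ⟨_, rfl⟩
    set ψ : ↥(eComponent n R M i0) →ₗ[R] Q :=
      ((LinearMap.ker π).liftQ θ hθker) ∘ₗ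
        (LinearMap.quotKerEquivOfSurjective π hp.1).symm.toLinearMap with hψdef
    have hψπ : ∀ x : Fin b → R, ψ (π x) = θ x := by
      intro x
      have h1 : (LinearMap.quotKerEquivOfSurjective π hp.1).symm (π x)
          = Submodule.Quotient.mk x := by
        apply (LinearMap.quotKerEquivOfSurjective π hp.1).injective
        rw [LinearEquiv.apply_symm_apply]
        rfl
      show ((LinearMap.ker π).liftQ θ hθker)
        ((LinearMap.quotKerEquivOfSurjective π hp.1).symm (π x)) = θ x
      rw [h1, Submodule.liftQ_apply]
    set Φ : M' →ₗ[S] Q := hbc.lift (ψ ∘ₗ eProj (R := R) (M := M) i0) with hΦdef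
    have hΦf : ∀ m : M, Φ (f m) = ψ (eProj (R := R) (M := M) i0 m) := fun m =>
      hbc.lift_eq _ m
    have hΦπ'' : ∀ y : Fin b → S, Φ (π'' y) = Submodule.Quotient.mk y := by
      intro y
      have hone : ∀ k, Φ (π'' (Pi.single k 1)) = Submodule.Quotient.mk ((Pi.single k (1 : S) : Fin b → S)) := by
        intro k
        rw [hπ''single, hΦf]
        have heq : eProj (R := R) (M := M) i0 (w k) = π (Pi.single k 1) := by
          apply Subtype.ext
          rw [eProj_coe, hwmem]
        rw [heq, hψπ, hθ_apply]
        congr 1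
        funext q
        rw [hα_apply]
        rcases eq_or_ne q k with h | h
        · subst h; rw [Pi.single_eq_same, Pi.single_eq_same, _root_.map_one]
        · rw [Pi.single_eq_of_ne h, Pi.single_eq_of_ne h, _root_.map_zero]
      conv_lhs => rw [hsumsingleS y]
      conv_rhs => rw [hsumsingleS y]
      rw [map_sum, map_sum]
      rw [show Submodule.Quotient.mk (∑ k, y k • (Pi.single k (1:S) : Fin b → S))
        = (LinearMap.range (H.map φ).vecMulLinear).mkQ (∑ k, y k • (Pi.single k (1:S) : Fin b → S)) from rfl,
        map_sum]
      refine Finset.sum_congr rfl fun k _ => ?_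
      rw [_root_.map_smul, _root_.map_smul, hone k]
      rfl
    intro y hy
    have h0 : π'' y = 0 := by
      have := congrArg (Subtype.val) (LinearMap.mem_ker.mp hy)
      rwa [hπ'coe] at this
    have : Submodule.Quotient.mk (p := LinearMap.range (H.map φ).vecMulLinear) y = 0 := by
      rw [← hΦπ'' y, h0, map_zero]
    exact (Submodule.Quotient.mk_eq_zero _).mp this
  have hp' : IsPresentation S (H.map φ) ↥(eComponent n S M' i0) π' :=
    ⟨hsurj, le_antisymm hker_le hker_ge⟩
  rw [fitIdeal_eq_of_isPresentation hp', fitIdeal_eq_of_isPresentation hp,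
    minorsIdeal_map φ H]
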